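/- Let N be a free abelian group of finite rank n and let γ₁, γ₂ be saturated subgroups of N such that the subgroup γ₁ + γ₂ has rank n (equivalently, finite index in N). Then [N : γ₁ + γ₂] = [(γ₁ ∩ γ₂)^⊥ : γ₁^⊥ + γ₂^⊥], where the orthogonal subgroups are taken inside the dual lattice M = Hom(N, ℤ). In particular the index on the right-hand side is finite. -/

import Mathlib

/-- A subgroup `γ` of an abelian group is saturated if `k • x ∈ γ` implies
`k = 0` or `x ∈ γ`. -/
def IsSaturated {N : Type*} [AddCommGroup N] (γ : AddSubgroup N) : Prop :=
  ∀ (k : ℤ) (x : N), k • x ∈ γ → k = 0 ∨ x ∈ γ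

/-- The orthogonal of a subgroup `γ` of `N` inside the dual lattice `Hom(N, ℤ)`:
all homomorphisms vanishing identically on `γ`. -/
def perp {N : Type*} [AddCommGroup N] (γ : AddSubgroup N) : AddSubgroup (N →+ ℤ) where
  carrier := {f | ∀ x ∈ γ, f x = 0}
  zero_mem' := fun _ _ => rfl
  add_mem' := by intro f g hf hg x hx; simp [hf x hx, hg x hx]
  neg_mem' := by intro f hf x hx; simp [hf x hx]

lemma mem_perp_iff {N : Type*} [AddCommGroup N] {γ : AddSubgroup N} {f : N →+ ℤ} :
    f ∈ perp γ ↔ ∀ x ∈ γ, f x = 0 := Iff.rfl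

/-- Counting `n`-torsion in `ZMod d`. -/
lemma card_torsion_zmod (n d : ℕ) (hn : n ≠ 0) (hd : d ≠ 0) (hnd : n ∣ d) :
    Nat.card {x : ZMod d // n • x = 0} = n := by
  haveI : NeZero d := ⟨hd⟩
  obtain ⟨m, rfl⟩ := hnd
  have hm : m ≠ 0 := by rintro rfl; simp at hd
  have hiff : ∀ x : ZMod (n * m), n • x = 0 ↔ x ∈ AddSubgroup.zmultiples ((m : ZMod (n * m))) := by
    intro x
    rw [AddSubgroup.mem_zmultiples_iff]
    constructor
    · intro hx
      have h1 : ((n * x.val : ℕ) : ZMod (n * m)) = 0 := by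
        push_cast
        rw [ZMod.natCast_val, ZMod.cast_id, ← nsmul_eq_mul]
        exact hx
      have h2 : (n * m : ℕ) ∣ n * x.val := (ZMod.natCast_eq_zero_iff _ _).mp h1
      have h3 : m ∣ x.val := (Nat.mul_dvd_mul_iff_left (Nat.pos_of_ne_zero hn)).mp h2
      obtain ⟨k, hk⟩ := h3
      refine ⟨(k : ℤ), ?_⟩
      have hx2 : ((m * k : ℕ) : ZMod (n * m)) = x := by rw [← hk, ZMod.natCast_val, ZMod.cast_id]
      rw [← hx2]
      push_cast
      rw [natCast_zsmul, nsmul_eq_mul]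
      ring
    · rintro ⟨z, rfl⟩
      have h0 : (n : ℕ) • ((m : ZMod (n * m))) = 0 := by
        rw [nsmul_eq_mul]
        norm_cast
        simp
      rw [smul_comm, h0, smul_zero]
  calc Nat.card {x : ZMod (n*m) // n • x = 0}
      = Nat.card (AddSubgroup.zmultiples ((m : ZMod (n * m)))) :=
        Nat.card_congr (Equiv.subtypeEquivRight hiff)
    _ = addOrderOf ((m : ZMod (n * m))) := Nat.card_zmultiples _
    _ = n := by
        rw [ZMod.addOrderOf_coe m hd, Nat.gcd_eq_right ⟨n, mul_comm n m⟩]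
        have hcomm : n * m = m * n := mul_comm n m
        rw [hcomm, Nat.mul_div_cancel_left n (Nat.pos_of_ne_zero hm)]

/-- Counting homomorphisms from a cyclic group into `ZMod d`. -/
lemma card_hom_zmod_cyclic (n d : ℕ) (hd : d ≠ 0) (hnd : n ∣ d) :
    Nat.card (ZMod n →+ ZMod d) = n := by
  have hn : n ≠ 0 := by rintro rfl; simp at hnd; omega
  have e1 : {x : ZMod d // n • x = 0} ≃ { f : ℤ →+ ZMod d // f n = 0 } := by
    refine Equiv.subtypeEquiv (zmultiplesHom (ZMod d)) fun x => ?_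
    rw [zmultiplesHom_apply, natCast_zsmul]
  have e2 := (e1.trans (ZMod.lift n (A := ZMod d)) :
    {x : ZMod d // n • x = 0} ≃ (ZMod n →+ ZMod d))
  rw [← Nat.card_congr e2]
  exact card_torsion_zmod n d hn hd hnd

open DirectSum in
/-- Counting homomorphisms from a finite abelian group of exponent dividing `d`
into `ZMod d`. -/
lemma card_hom_zmod (B : Type*) [AddCommGroup B] [Finite B] (d : ℕ) (hd : d ≠ 0)
    (hB : ∀ b : B, d • b = 0) : Nat.card (B →+ ZMod d) = Nat.card B := by
  classical
  haveI : NeZero d := ⟨hd⟩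
  obtain ⟨ι, hι, p, hp, e, ⟨eq⟩⟩ := AddCommGroup.equiv_directSum_zmod_of_finite B
  set nn : ι → ℕ := fun i => p i ^ e i with hnn
  have hdvd : ∀ i, nn i ∣ d := by
    intro i
    have h1 : d • (DirectSum.of (fun i => ZMod (nn i)) i 1) = 0 := by
      have h0 := hB (eq.symm (DirectSum.of (fun i => ZMod (nn i)) i 1))
      have h2 := congrArg eq h0
      rw [map_nsmul, eq.apply_symm_apply, map_zero] at h2
      exact h2
    rw [← map_nsmul] at h1
    have h3 : d • (1 : ZMod (nn i)) = 0 := by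
      have h4 := DFunLike.congr_fun h1 i
      rwa [DirectSum.of_eq_same, DirectSum.zero_apply] at h4
    rw [nsmul_eq_mul, mul_one] at h3
    exact (ZMod.natCast_eq_zero_iff d (nn i)).mp h3
  have ehom : (B →+ ZMod d) ≃ ((⨁ i, ZMod (nn i)) →+ ZMod d) :=
    { toFun := fun f => f.comp eq.symm.toAddMonoidHom
      invFun := fun g => g.comp eq.toAddMonoidHom
      left_inv := fun f => by ext x; simp
      right_inv := fun g => by ext x; simp }
  have ehom2 : (∀ i : ι, ZMod (nn i) →+ ZMod d) ≃ ((⨁ i, ZMod (nn i)) →+ ZMod d) :=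
    { toFun := DirectSum.toAddMonoid
      invFun := fun F i => F.comp (DirectSum.of (fun i => ZMod (nn i)) i)
      left_inv := fun φ => by funext i; ext x; simp [DirectSum.toAddMonoid_of]
      right_inv := fun F => DirectSum.addHom_ext fun i x => by simp [DirectSum.toAddMonoid_of] }
  have eB : B ≃ ∀ i, ZMod (nn i) := eq.toEquiv.trans (DirectSum.addEquivProd _).toEquiv
  rw [Nat.card_congr ehom, ← Nat.card_congr ehom2, Nat.card_congr eB, Nat.card_pi, Nat.card_pi]
  exact Finset.prod_congr rfl fun i _ => by
    rw [card_hom_zmod_cyclic (nn i) d hd (hdvd i), Nat.card_zmod]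

/-- Let `N` be a free abelian group of finite rank `n` and `γ₁, γ₂` saturated subgroups
such that `γ₁ + γ₂` has rank `n`.  Then `[N : γ₁ + γ₂] = [(γ₁ ∩ γ₂)^⊥ : γ₁^⊥ + γ₂^⊥]`,
the orthogonals being taken in the dual lattice `M = Hom(N, ℤ)`; in particular the
index on the right-hand side is finite. -/
theorem stmt_10 {N : Type*} [AddCommGroup N] [Module.Free ℤ N] [Module.Finite ℤ N]
    (n : ℕ) (hn : Module.finrank ℤ N = n)
    (γ₁ γ₂ : AddSubgroup N) (h₁ : IsSaturated γ₁) (h₂ : IsSaturated γ₂)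
    (hrank : Module.finrank ℤ (AddSubgroup.toIntSubmodule (γ₁ ⊔ γ₂)) = n) :
    (γ₁ ⊔ γ₂).index = (perp γ₁ ⊔ perp γ₂).relIndex (perp (γ₁ ⊓ γ₂)) ∧
      (perp γ₁ ⊔ perp γ₂).relIndex (perp (γ₁ ⊓ γ₂)) ≠ 0 := by
  classical
  -- Step 1 : the index of `γ₁ ⊔ γ₂` is finite.
  have hfin : (γ₁ ⊔ γ₂).index ≠ 0 := by
    obtain ⟨m, snf⟩ := (AddSubgroup.toIntSubmodule (γ₁ ⊔ γ₂)).smithNormalForm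
      (Module.Free.chooseBasis ℤ N)
    have h1 : Module.finrank ℤ (AddSubgroup.toIntSubmodule (γ₁ ⊔ γ₂)) = m := by
      rw [Module.finrank_eq_card_basis snf.bN, Fintype.card_fin]
    have h2 : Module.finrank ℤ N = Fintype.card (Module.Free.ChooseBasisIndex ℤ N) :=
      Module.finrank_eq_card_basis (Module.Free.chooseBasis ℤ N)
    have hm : m = Fintype.card (Module.Free.ChooseBasisIndex ℤ N) := by omega
    have h3 := snf.toAddSubgroup_index_ne_zero_iff.mpr hm
    rwa [AddSubgroup.toIntSubmodule_toAddSubgroup] at h3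
  set d := (γ₁ ⊔ γ₂).index with hd_def
  have hdcard : d = Nat.card (N ⧸ (γ₁ ⊔ γ₂)) := AddSubgroup.index_eq_card _
  have hdz : (d : ℤ) ≠ 0 := by exact_mod_cast hfin
  haveI : NeZero d := ⟨hfin⟩
  haveI hAfin : Finite (N ⧸ (γ₁ ⊔ γ₂)) := by
    refine (Nat.card_ne_zero.mp ?_).2
    rw [← hdcard]; exact hfin
  have htorA : ∀ a : N ⧸ (γ₁ ⊔ γ₂), d • a = 0 := by
    intro a; rw [hdcard]; exact card_nsmul_eq_zero'
  have hdmem : ∀ x : N, d • x ∈ γ₁ ⊔ γ₂ := by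
    intro x
    have h1 : (QuotientAddGroup.mk' (γ₁ ⊔ γ₂)) (d • x) = 0 := by
      rw [map_nsmul]; exact htorA _
    rwa [QuotientAddGroup.mk'_apply, QuotientAddGroup.eq_zero_iff] at h1
  -- Step 2 : decompositions `d • x = c₁ x + c₂ x`.
  have hsup : ∀ x : N, ∃ y ∈ γ₁, ∃ z ∈ γ₂, y + z = d • x :=
    fun x => AddSubgroup.mem_sup.mp (hdmem x)
  choose c₁ hc₁m c₂ hc₂m hc using hsup
  -- Step 3 : key well-definedness lemmas.
  have key1 : ∀ (f : N →+ ℤ), f ∈ perp (γ₁ ⊓ γ₂) → ∀ y₁ y₂ z₁ z₂ : N,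
      y₁ ∈ γ₁ → y₂ ∈ γ₂ → z₁ ∈ γ₁ → z₂ ∈ γ₂ → y₁ + y₂ = z₁ + z₂ → f y₁ = f z₁ := by
    intro f hf y₁ y₂ z₁ z₂ hy₁ hy₂ hz₁ hz₂ heq
    have hd1 : y₁ - z₁ = z₂ - y₂ := by
      have : y₁ + y₂ = z₁ + z₂ := heq
      abel_nf
      linear_combination (norm := abel) this
    have hmem : y₁ - z₁ ∈ γ₁ ⊓ γ₂ := by
      rw [AddSubgroup.mem_inf]
      exact ⟨sub_mem hy₁ hz₁, hd1 ▸ sub_mem hz₂ hy₂⟩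
    have h0 := hf _ hmem
    rw [map_sub] at h0
    linarith
  have key2 : ∀ (f : N →+ ℤ), f ∈ perp (γ₁ ⊓ γ₂) → ∀ y₁ y₂ z₁ z₂ : N,
      y₁ ∈ γ₁ → y₂ ∈ γ₂ → z₁ ∈ γ₁ → z₂ ∈ γ₂ → y₁ + y₂ = z₁ + z₂ → f y₂ = f z₂ := by
    intro f hf y₁ y₂ z₁ z₂ hy₁ hy₂ hz₁ hz₂ heq
    have h5 := key1 f hf y₁ y₂ z₁ z₂ hy₁ hy₂ hz₁ hz₂ heq
    have h6 : f y₁ + f y₂ = f z₁ + f z₂ := by rw [← map_add, ← map_add, heq]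
    linarith
  have hdecadd : ∀ x y : N, c₁ (x + y) + c₂ (x + y) = (c₁ x + c₁ y) + (c₂ x + c₂ y) := by
    intro x y
    rw [hc (x + y), smul_add, ← hc x, ← hc y]
    abel
  have main_add₁ : ∀ (f : N →+ ℤ), f ∈ perp (γ₁ ⊓ γ₂) → ∀ x y : N,
      f (c₁ (x + y)) = f (c₁ x) + f (c₁ y) := by
    intro f hf x y
    have h7 := key1 f hf (c₁ (x + y)) (c₂ (x + y)) (c₁ x + c₁ y) (c₂ x + c₂ y)
      (hc₁m (x + y)) (hc₂m (x + y)) (add_mem (hc₁m x) (hc₁m y)) (add_mem (hc₂m x) (hc₂m y))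
      (hdecadd x y)
    rw [h7, map_add]
  have main_add₂ : ∀ (f : N →+ ℤ), f ∈ perp (γ₁ ⊓ γ₂) → ∀ x y : N,
      f (c₂ (x + y)) = f (c₂ x) + f (c₂ y) := by
    intro f hf x y
    have h7 := key2 f hf (c₁ (x + y)) (c₂ (x + y)) (c₁ x + c₁ y) (c₂ x + c₂ y)
      (hc₁m (x + y)) (hc₂m (x + y)) (add_mem (hc₁m x) (hc₁m y)) (add_mem (hc₂m x) (hc₂m y))
      (hdecadd x y)
    rw [h7, map_add]
  -- Step 4 : the pairing `Φ`.
  let inner : ↥(perp (γ₁ ⊓ γ₂)) → (N →+ ZMod d) := fun f =>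
    AddMonoidHom.mk' (fun x => ((f.1 (c₁ x) : ℤ) : ZMod d)) (fun x y => by
      show ((f.1 (c₁ (x + y)) : ℤ) : ZMod d)
        = ((f.1 (c₁ x) : ℤ) : ZMod d) + ((f.1 (c₁ y) : ℤ) : ZMod d)
      rw [main_add₁ f.1 f.2 x y]; push_cast; ring)
  have hker0 : ∀ f : ↥(perp (γ₁ ⊓ γ₂)), ∀ y ∈ γ₁ ⊔ γ₂, inner f y = 0 := by
    intro f y hy
    obtain ⟨u, hu, v, hv, huv⟩ := AddSubgroup.mem_sup.mp hy
    have hdec : c₁ y + c₂ y = d • u + d • v := by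
      rw [hc y, ← smul_add, huv]
    have h8 := key1 f.1 f.2 (c₁ y) (c₂ y) (d • u) (d • v)
      (hc₁m y) (hc₂m y) (AddSubgroup.nsmul_mem _ hu d) (AddSubgroup.nsmul_mem _ hv d) hdec
    show ((f.1 (c₁ y) : ℤ) : ZMod d) = 0
    rw [h8, map_nsmul, nsmul_eq_mul]
    push_cast
    simp [ZMod.natCast_self]
  let Φ : ↥(perp (γ₁ ⊓ γ₂)) →+ ((N ⧸ (γ₁ ⊔ γ₂)) →+ ZMod d) :=
    AddMonoidHom.mk'
      (fun f => QuotientAddGroup.lift (γ₁ ⊔ γ₂) (inner f)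
        (fun y hy => by rw [AddMonoidHom.mem_ker]; exact hker0 f y hy))
      (fun f g => by
        ext x
        show ((((f + g).1) (c₁ x) : ℤ) : ZMod d)
          = ((f.1 (c₁ x) : ℤ) : ZMod d) + ((g.1 (c₁ x) : ℤ) : ZMod d)
        rw [AddSubgroup.coe_add, AddMonoidHom.add_apply, Int.cast_add])
  have hΦapp : ∀ (f : ↥(perp (γ₁ ⊓ γ₂))) (x : N),
      Φ f (QuotientAddGroup.mk x) = ((f.1 (c₁ x) : ℤ) : ZMod d) := fun f x => rfl
  -- Step 5 : the kernel of `Φ`.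
  have hker_eq : Φ.ker = (perp γ₁ ⊔ perp γ₂).addSubgroupOf (perp (γ₁ ⊓ γ₂)) := by
    ext f
    rw [AddMonoidHom.mem_ker, AddSubgroup.mem_addSubgroupOf]
    constructor
    · intro hf0
      have hpt : ∀ x : N, ((f.1 (c₁ x) : ℤ) : ZMod d) = 0 := by
        intro x
        rw [← hΦapp f x, hf0]
        rfl
      have hdvd1 : ∀ x, (d : ℤ) ∣ f.1 (c₁ x) :=
        fun x => (ZMod.intCast_zmod_eq_zero_iff_dvd _ _).mp (hpt x)
      have hsum : ∀ x : N, f.1 (c₁ x) + f.1 (c₂ x) = (d : ℤ) * f.1 x := by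
        intro x
        rw [← map_add, hc x, map_nsmul, nsmul_eq_mul]
      have hdvd2 : ∀ x, (d : ℤ) ∣ f.1 (c₂ x) := by
        intro x
        have h9 : f.1 (c₂ x) = (d : ℤ) * f.1 x - f.1 (c₁ x) := by linarith [hsum x]
        rw [h9]
        exact dvd_sub (Dvd.intro _ rfl) (hdvd1 x)
      choose g hg using hdvd2
      have hgadd : ∀ x y, g (x + y) = g x + g y := by
        intro x y
        have h10 : (d : ℤ) * g (x + y) = (d : ℤ) * (g x + g y) := by
          rw [← hg, main_add₂ f.1 f.2 x y, hg, hg]; ring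
        exact mul_left_cancel₀ hdz h10
      let f₁ : N →+ ℤ := AddMonoidHom.mk' g hgadd
      have hf₁γ₁ : f₁ ∈ perp γ₁ := by
        rw [mem_perp_iff]
        intro y hy
        have hdec : c₁ y + c₂ y = d • y + 0 := by rw [hc y, add_zero]
        have h11 := key2 f.1 f.2 (c₁ y) (c₂ y) (d • y) 0
          (hc₁m y) (hc₂m y) (AddSubgroup.nsmul_mem _ hy d) (zero_mem _) hdec
        have h12 : (d : ℤ) * g y = 0 := by
          rw [← hg, h11, map_zero]
        have := mul_left_cancel₀ hdz (h12.trans (mul_zero (d : ℤ)).symm)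
        exact this
      have hf₂γ₂ : f.1 - f₁ ∈ perp γ₂ := by
        rw [mem_perp_iff]
        intro y hy
        have hdec : c₁ y + c₂ y = 0 + d • y := by rw [hc y, zero_add]
        have h11 := key2 f.1 f.2 (c₁ y) (c₂ y) 0 (d • y)
          (hc₁m y) (hc₂m y) (zero_mem _) (AddSubgroup.nsmul_mem _ hy d) hdec
        have h12 : (d : ℤ) * g y = (d : ℤ) * f.1 y := by
          rw [← hg, h11, map_nsmul, nsmul_eq_mul]
        have h13 : g y = f.1 y := mul_left_cancel₀ hdz h12
        show f.1 y - f₁ y = 0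
        show f.1 y - g y = 0
        rw [h13, sub_self]
      refine AddSubgroup.mem_sup.mpr ⟨f₁, hf₁γ₁, f.1 - f₁, hf₂γ₂, ?_⟩
      abel
    · intro hf
      obtain ⟨f₁, hf₁, f₂, hf₂, hsum⟩ := AddSubgroup.mem_sup.mp hf
      ext x
      simp only [AddMonoidHom.comp_apply, QuotientAddGroup.mk'_apply, AddMonoidHom.zero_apply]
      rw [hΦapp]
      have h14 : f.1 (c₁ x) = f₂ (c₁ x) := by
        have := congrArg (fun φ : N →+ ℤ => φ (c₁ x)) hsum
        simp only [AddMonoidHom.add_apply] at this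
        rw [← this, hf₁ _ (hc₁m x), zero_add]
      have h15 : f₂ (c₁ x) = (d : ℤ) * f₂ x := by
        have h16 : f₂ (c₁ x) + f₂ (c₂ x) = (d : ℤ) * f₂ x := by
          rw [← map_add, hc x, map_nsmul, nsmul_eq_mul]
        rw [hf₂ _ (hc₂m x), add_zero] at h16
        exact h16
      rw [h14, h15]
      push_cast
      simp [ZMod.natCast_self]
  -- Step 6 : relindex as the cardinality of the range of `Φ`.
  have hrel : (perp γ₁ ⊔ perp γ₂).relIndex (perp (γ₁ ⊓ γ₂)) = Nat.card ↥Φ.range := by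
    show ((perp γ₁ ⊔ perp γ₂).addSubgroupOf (perp (γ₁ ⊓ γ₂))).index = _
    rw [← hker_eq, AddSubgroup.index_eq_card]
    exact Nat.card_congr (QuotientAddGroup.quotientKerEquivRange Φ).toEquiv
  -- Step 7 : nondegeneracy.
  have hdivstep : ∀ z : N, (∀ f : N →+ ℤ, f ∈ perp (γ₁ ⊓ γ₂) → (d : ℤ) ∣ f z) →
      ∃ w : N, z - (d : ℤ) • w ∈ γ₁ ⊓ γ₂ := by
    intro z hz
    set KS : Submodule ℤ N := AddSubgroup.toIntSubmodule (γ₁ ⊓ γ₂) with hKS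
    haveI : NoZeroSMulDivisors ℤ (N ⧸ KS) := by
      refine ⟨fun {c y} hcy => ?_⟩
      obtain ⟨x, rfl⟩ := Submodule.mkQ_surjective KS y
      rw [← map_smul, Submodule.mkQ_apply, Submodule.Quotient.mk_eq_zero] at hcy
      have hmem : c • x ∈ γ₁ ⊓ γ₂ := hcy
      have hK : IsSaturated (γ₁ ⊓ γ₂) := by
        intro k x' hk
        rw [AddSubgroup.mem_inf] at hk
        rcases h₁ k x' hk.1 with h | hh
        · exact Or.inl h
        · rcases h₂ k x' hk.2 with h | hh2
          · exact Or.inl h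
          · exact Or.inr (AddSubgroup.mem_inf.mpr ⟨hh, hh2⟩)
      rcases hK c x hmem with h | h
      · exact Or.inl h
      · refine Or.inr ?_
        rw [Submodule.mkQ_apply, Submodule.Quotient.mk_eq_zero]
        exact h
    let b := Module.Free.chooseBasis ℤ (N ⧸ KS)
    have hcoord : ∀ i, (d : ℤ) ∣ b.repr (KS.mkQ z) i := by
      intro i
      refine hz ((b.coord i).comp KS.mkQ).toAddMonoidHom ?_
      rw [mem_perp_iff]
      intro k hk
      have hk0 : KS.mkQ k = 0 := by
        rw [Submodule.mkQ_apply, Submodule.Quotient.mk_eq_zero]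
        exact hk
      show (b.coord i) (KS.mkQ k) = 0
      rw [hk0, map_zero]
    choose t ht using hcoord
    have hrep : KS.mkQ z = (d : ℤ) • ∑ i, t i • b i := by
      conv_lhs => rw [← b.sum_repr (KS.mkQ z)]
      rw [Finset.smul_sum]
      refine Finset.sum_congr rfl fun i _ => ?_
      rw [ht i, mul_smul]
    obtain ⟨w, hw⟩ := Submodule.mkQ_surjective KS (∑ i, t i • b i)
    refine ⟨w, ?_⟩
    have h17 : KS.mkQ (z - (d : ℤ) • w) = 0 := by
      rw [map_sub, map_smul, hw, hrep, sub_self]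
    rw [Submodule.mkQ_apply, Submodule.Quotient.mk_eq_zero] at h17
    exact h17
  have nondeg : ∀ x : N,
      (∀ f : N →+ ℤ, f ∈ perp (γ₁ ⊓ γ₂) → ((f (c₁ x) : ℤ) : ZMod d) = 0) → x ∈ γ₁ ⊔ γ₂ := by
    intro x hx
    have hdvd : ∀ f : N →+ ℤ, f ∈ perp (γ₁ ⊓ γ₂) → (d : ℤ) ∣ f (c₁ x) :=
      fun f hf => (ZMod.intCast_zmod_eq_zero_iff_dvd _ _).mp (hx f hf)
    obtain ⟨w, hw⟩ := hdivstep (c₁ x) hdvd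
    rw [AddSubgroup.mem_inf] at hw
    have hwγ₁ : w ∈ γ₁ := by
      have h18 : (d : ℤ) • w = c₁ x - (c₁ x - (d : ℤ) • w) := by abel
      have h19 : (d : ℤ) • w ∈ γ₁ := h18 ▸ sub_mem (hc₁m x) hw.1
      rcases h₁ (d : ℤ) w h19 with h | h
      · exact absurd h hdz
      · exact h
    have hxw : x - w ∈ γ₂ := by
      have h20 : (d : ℤ) • (x - w) = (c₁ x - (d : ℤ) • w) + c₂ x := by
        have h21 : c₁ x + c₂ x = (d : ℤ) • x := by rw [hc x, natCast_zsmul]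
        rw [smul_sub]
        rw [← h21]
        abel
      have h22 : (d : ℤ) • (x - w) ∈ γ₂ := h20 ▸ add_mem hw.2 (hc₂m x)
      rcases h₂ (d : ℤ) (x - w) h22 with h | h
      · exact absurd h hdz
      · exact h
    have h23 : x = w + (x - w) := by abel
    exact h23 ▸ AddSubgroup.mem_sup.mpr ⟨w, hwγ₁, x - w, hxw, rfl⟩
  -- Step 8 : evaluation map and counting.
  haveI : Finite ((N ⧸ (γ₁ ⊔ γ₂)) →+ ZMod d) := Finite.of_injective _ DFunLike.coe_injective
  haveI : Finite ↥Φ.range := Subtype.finite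
  haveI : Finite (↥Φ.range →+ ZMod d) := Finite.of_injective _ DFunLike.coe_injective
  let ev : (N ⧸ (γ₁ ⊔ γ₂)) →+ (↥Φ.range →+ ZMod d) :=
    AddMonoidHom.mk'
      (fun a => AddMonoidHom.mk' (fun s => s.1 a) (fun s t => rfl))
      (fun a b => by ext s; exact map_add s.1 a b)
  have hev_inj : Function.Injective ev := by
    rw [injective_iff_map_eq_zero]
    intro a ha
    obtain ⟨x, rfl⟩ := QuotientAddGroup.mk'_surjective (γ₁ ⊔ γ₂) a
    have hx : ∀ f : N →+ ℤ, f ∈ perp (γ₁ ⊓ γ₂) → ((f (c₁ x) : ℤ) : ZMod d) = 0 := by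
      intro f hf
      have h24 := DFunLike.congr_fun ha ⟨Φ ⟨f, hf⟩, ⟨⟨f, hf⟩, rfl⟩⟩
      have h25 : Φ ⟨f, hf⟩ (QuotientAddGroup.mk' (γ₁ ⊔ γ₂) x) = 0 := h24
      rwa [QuotientAddGroup.mk'_apply, hΦapp] at h25
    have hmem := nondeg x hx
    rw [QuotientAddGroup.mk'_apply, QuotientAddGroup.eq_zero_iff]
    exact hmem
  have hc1 : Nat.card (N ⧸ (γ₁ ⊔ γ₂)) ≤ Nat.card (↥Φ.range →+ ZMod d) :=
    Nat.card_le_card_of_injective ev hev_inj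
  have htorS : ∀ s : ↥Φ.range, d • s = 0 := by
    intro s
    refine Subtype.ext ?_
    ext a
    show (d • s.1) a = 0
    rw [AddMonoidHom.nsmul_apply, nsmul_eq_mul]
    simp [ZMod.natCast_self]
  have hc2 : Nat.card (↥Φ.range →+ ZMod d) = Nat.card ↥Φ.range :=
    card_hom_zmod _ d hfin htorS
  have hc3 : Nat.card ↥Φ.range ≤ Nat.card ((N ⧸ (γ₁ ⊔ γ₂)) →+ ZMod d) :=
    Nat.card_le_card_of_injective Subtype.val Subtype.val_injective
  have hc4 : Nat.card ((N ⧸ (γ₁ ⊔ γ₂)) →+ ZMod d) = Nat.card (N ⧸ (γ₁ ⊔ γ₂)) :=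
    card_hom_zmod _ d hfin htorA
  have hfinal : Nat.card (N ⧸ (γ₁ ⊔ γ₂)) = Nat.card ↥Φ.range :=
    le_antisymm (hc1.trans hc2.le) (hc3.trans hc4.le)
  constructor
  · rw [hrel, ← hfinal, ← hdcard]
  · rw [hrel, ← hfinal, ← hdcard]
    exact hfin
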